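/- Let p ≥ 3 be a prime, k ≥ 0 a natural number, and n any integer. Then the generalized binomial coefficients satisfy binom(n, p^k) − binom(n − 2·p^k, p^k) ≡ 2 (mod p). -/

import Mathlib

open Finset

lemma key_step (p : ℕ) (hp : p.Prime) (k : ℕ) (m : ℤ) :
    Ring.choose (m + (p : ℤ) ^ k) (p ^ k) ≡ Ring.choose m (p ^ k) + 1 [ZMOD (p : ℤ)] := by
  have hc : ((p : ℤ)) ^ k = ((p ^ k : ℕ) : ℤ) := by push_cast; ring
  have h := Ring.add_choose_eq (r := m) (s := ((p : ℤ)) ^ k) (p ^ k) (Commute.all _ _)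
  rw [← ZMod.intCast_eq_intCast_iff, h, Finset.Nat.sum_antidiagonal_eq_sum_range_succ_mk]
  push_cast
  have hchoose : ∀ j : ℕ, ((Ring.choose ((p : ℤ) ^ k) j : ℤ) : ZMod p)
      = (((p ^ k).choose j : ℕ) : ZMod p) := by
    intro j
    rw [hc, Ring.choose_natCast]
    push_cast
    rfl
  rw [Finset.sum_range_succ]
  have hmain : ∑ i ∈ Finset.range (p ^ k),
      ((Ring.choose m i : ℤ) : ZMod p) * ((Ring.choose ((p : ℤ) ^ k) (p ^ k - i) : ℤ) : ZMod p)
      = 1 := by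
    rw [Finset.sum_eq_single_of_mem 0 (Finset.mem_range.mpr (Nat.pow_pos (n := k) hp.pos))]
    · simp [hchoose, Ring.choose_zero_right]
    · intro i hi hi0
      have hilt := Finset.mem_range.mp hi
      rw [hchoose, (ZMod.natCast_eq_zero_iff _ _).mpr
        (Nat.Prime.dvd_choose_pow hp (by omega : p ^ k - i ≠ 0)
          (by have h1 := Nat.one_le_iff_ne_zero.mpr hi0; omega : p ^ k - i ≠ p ^ k)), mul_zero]
  rw [hmain]
  simp [hchoose, Ring.choose_zero_right]
  ring

theorem stmt10 (p : ℕ) (hp : p.Prime) (hp3 : 3 ≤ p) (k : ℕ) (n : ℤ) :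
    Ring.choose n (p ^ k) - Ring.choose (n - 2 * (p : ℤ) ^ k) (p ^ k) ≡ 2 [ZMOD (p : ℤ)] := by
  have h1 := key_step p hp k (n - (p : ℤ) ^ k)
  rw [sub_add_cancel] at h1
  have h2 := key_step p hp k (n - 2 * (p : ℤ) ^ k)
  have he : n - 2 * (p : ℤ) ^ k + (p : ℤ) ^ k = n - (p : ℤ) ^ k := by ring
  rw [he] at h2
  have h3 := (h1.trans (h2.add_right 1)).sub_right (Ring.choose (n - 2 * (p : ℤ) ^ k) (p ^ k))
  calc Ring.choose n (p ^ k) - Ring.choose (n - 2 * (p : ℤ) ^ k) (p ^ k)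
      ≡ Ring.choose (n - 2 * (p : ℤ) ^ k) (p ^ k) + 1 + 1
        - Ring.choose (n - 2 * (p : ℤ) ^ k) (p ^ k) [ZMOD (p : ℤ)] := h3
    _ = 2 := by ring
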